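/- Let f : ℝ → ℝ be continuous on [0,∞), continuously differentiable with f' strictly decreasing on [0,∞), bounded above, f(0) = 0, and let r > 0 with f'(0) > r. Then for every u with 0 ≤ u < f'(0) − r there exists a unique x*(u) > 0 with f(x*(u)) = (r + u)·x*(u); moreover the map u ↦ x*(u) is strictly decreasing on [0, f'(0) − r). -/

import Mathlib

open Set Filter

/-- For every admissible constant dilution rate `u ∈ [0, f' 0 - r)` there is a unique
positive equilibrium `x*(u)` of the day dynamics, i.e. a unique `x > 0` with
`f x = (r + u) x`; moreover the equilibrium is strictly decreasing in `u`. -/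
theorem equilibrium_exists_unique_and_antitone
    (f : ℝ → ℝ) (r : ℝ)
    (hdiff : ∀ x ∈ Set.Ici (0 : ℝ), DifferentiableAt ℝ f x)
    (hderiv_cont : ContinuousOn (deriv f) (Set.Ici (0 : ℝ)))
    (hconc : StrictAntiOn (deriv f) (Set.Ici (0 : ℝ)))
    (hbdd : BddAbove (f '' Set.Ici (0 : ℝ)))
    (hf0 : f 0 = 0)
    (hr : 0 < r)
    (hr' : r < deriv f 0) :
    (∀ u : ℝ, 0 ≤ u → u < deriv f 0 - r → ∃! x : ℝ, 0 < x ∧ f x = (r + u) * x) ∧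
    (∀ u₁ u₂ x₁ x₂ : ℝ, 0 ≤ u₁ → u₁ < u₂ → u₂ < deriv f 0 - r →
      0 < x₁ → f x₁ = (r + u₁) * x₁ → 0 < x₂ → f x₂ = (r + u₂) * x₂ → x₂ < x₁) := by
  have hcont : ContinuousOn f (Set.Ici 0) := fun x hx =>
    ((hdiff x hx).continuousAt).continuousWithinAt
  -- Mean value theorem helper
  have mvt : ∀ a b : ℝ, 0 ≤ a → a < b →
      ∃ c ∈ Set.Ioo a b, deriv f c = (f b - f a) / (b - a) := by
    intro a b ha hab
    apply exists_hasDerivAt_eq_slope f (deriv f) hab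
    · exact hcont.mono (fun x hx => le_trans ha hx.1)
    · intro x hx
      exact (hdiff x (le_of_lt (lt_of_le_of_lt ha hx.1))).hasDerivAt
  -- Key: the slope f x / x is strictly decreasing on (0, ∞)
  have key : ∀ a b : ℝ, 0 < a → a < b → f b * a < f a * b := by
    intro a b ha hab
    obtain ⟨c₁, hc₁, hc₁'⟩ := mvt 0 a le_rfl ha
    obtain ⟨c₂, hc₂, hc₂'⟩ := mvt a b ha.le hab
    have hc₁₂ : c₁ < c₂ := lt_trans hc₁.2 hc₂.1
    have hlt : deriv f c₂ < deriv f c₁ :=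
      hconc (le_of_lt hc₁.1) (le_of_lt (lt_trans hc₁.1 hc₁₂)) hc₁₂
    have e1 : f a = deriv f c₁ * a := by
      rw [hc₁', hf0]
      rw [sub_zero, sub_zero, div_mul_cancel₀ _ ha.ne']
    have e2 : f b - f a = deriv f c₂ * (b - a) := by
      rw [hc₂', div_mul_cancel₀ _ (by linarith : b - a ≠ 0)]
    nlinarith [mul_pos (mul_pos (sub_pos.mpr hab) ha) (sub_pos.mpr hlt)]
  -- uniqueness/antitonicity core
  have anti : ∀ v₁ v₂ x₁ x₂ : ℝ, 0 < v₁ → v₁ < v₂ → 0 < x₁ → f x₁ = v₁ * x₁ →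
      0 < x₂ → f x₂ = v₂ * x₂ → x₂ < x₁ := by
    intro v₁ v₂ x₁ x₂ hv₁ hv₁₂ hx₁ he₁ hx₂ he₂
    rcases lt_trichotomy x₂ x₁ with h | h | h
    · exact h
    · exfalso; subst h; nlinarith
    · exfalso
      have := key x₁ x₂ hx₁ h
      rw [he₁, he₂] at this
      nlinarith [mul_pos hx₁ hx₂]
  constructor
  · -- existence and uniqueness
    intro u hu hu'
    have hv : 0 < r + u := by linarith
    have hv' : r + u < deriv f 0 := by linarith
    -- small positive point where f x > (r+u) x
    have hslope : Filter.Tendsto (slope f 0) (nhdsWithin 0 (Set.Ioi 0)) (nhds (deriv f 0)) :=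
      (hasDerivAt_iff_tendsto_slope.mp (hdiff 0 Set.self_mem_Ici).hasDerivAt).mono_left
        (nhdsWithin_mono 0 (fun x hx => ne_of_gt hx))
    have hev : ∀ᶠ x in nhdsWithin (0:ℝ) (Set.Ioi 0), r + u < slope f 0 x :=
      hslope.eventually_const_lt hv'
    obtain ⟨x₀, hx₀s, hx₀pos⟩ := (hev.and (eventually_mem_nhdsWithin)).exists
    have hx₀ : 0 < x₀ := hx₀pos
    have hfx₀ : (r + u) * x₀ < f x₀ := by
      have hs : slope f 0 x₀ = f x₀ / x₀ := by
        simp [slope_def_field, hf0]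
      rw [hs] at hx₀s
      rw [lt_div_iff₀ hx₀] at hx₀s
      linarith
    -- large point where f X < (r+u) X
    obtain ⟨M, hM⟩ := hbdd
    set X := max (x₀ + 1) (|M| / (r + u) + 1) with hXdef
    have hx₀X : x₀ < X := lt_of_lt_of_le (by linarith) (le_max_left _ _)
    have hX0 : 0 ≤ X := le_of_lt (lt_trans hx₀ hx₀X)
    have hfX : f X < (r + u) * X := by
      have h1 : f X ≤ M := hM (Set.mem_image_of_mem f hX0)
      have h2 : |M| / (r + u) + 1 ≤ X := le_max_right _ _
      have h3 : (r + u) * (|M| / (r + u) + 1) ≤ (r + u) * X :=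
        mul_le_mul_of_nonneg_left h2 hv.le
      have h4 : (r + u) * (|M| / (r + u) + 1) = |M| + (r + u) := by
        field_simp
      nlinarith [le_abs_self M]
    -- IVT
    have hgcont : ContinuousOn (fun x => f x - (r + u) * x) (Set.Icc x₀ X) := by
      apply ContinuousOn.sub
      · exact hcont.mono (fun x hx => le_trans hx₀.le hx.1)
      · exact (continuous_const.mul continuous_id).continuousOn
    have hsub : Set.Icc (f X - (r + u) * X) (f x₀ - (r + u) * x₀) ⊆
        (fun x => f x - (r + u) * x) '' Set.Icc x₀ X :=
      intermediate_value_Icc' hx₀X.le hgcont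
    have h0mem : (0:ℝ) ∈ Set.Icc (f X - (r + u) * X) (f x₀ - (r + u) * x₀) :=
      ⟨by linarith, by linarith⟩
    obtain ⟨x, hxI, hxeq⟩ := hsub h0mem
    refine ⟨x, ⟨lt_of_lt_of_le hx₀ hxI.1, by dsimp at hxeq; linarith⟩, ?_⟩
    -- uniqueness
    rintro y ⟨hy, hye⟩
    have hx : 0 < x := lt_of_lt_of_le hx₀ hxI.1
    have hxe : f x = (r + u) * x := by dsimp at hxeq; linarith
    rcases lt_trichotomy y x with h | h | h
    · exfalso; have := key y x hy h; nlinarith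
    · exact h
    · exfalso; have := key x y hx h; nlinarith
  · intro u₁ u₂ x₁ x₂ hu₁ hu₁₂ hu₂ hx₁ he₁ hx₂ he₂
    exact anti (r + u₁) (r + u₂) x₁ x₂ (by linarith) (by linarith) hx₁ he₁ hx₂ he₂
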